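/- Second-order bound on the violation of the moment condition: if σ(z) ⊆ σ(x'), g is twice continuously differentiable with |g''| ≤ τ everywhere, and ζ = ω' − E[ω'|x'] is square-integrable, then E[ |E[g(ω') | z] − E[g(E[ω'|x']) | z]| ] ≤ τ · E[ζ²]. -/

import Mathlib

open MeasureTheory Filter

lemma tay (g : ℝ → ℝ) (τ : ℝ) (hg : ContDiff ℝ 2 g)
    (hτ : ∀ w, |deriv (deriv g) w| ≤ τ) (x y : ℝ) :
    |g x - g y - deriv g y * (x - y)| ≤ τ * (x - y) ^ 2 := by
  have hg2 : ContDiff ℝ (1+1) g := by norm_num; exact hg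
  have hg1 : ContDiff ℝ 1 (deriv g) := (contDiff_succ_iff_deriv.mp hg2).2.2
  have hgd : Differentiable ℝ g := hg.differentiable (by norm_num)
  have hgd1 : Differentiable ℝ (deriv g) := hg1.differentiable (by norm_num)
  have hlip : ∀ a b : ℝ, |deriv g a - deriv g b| ≤ τ * |a - b| := by
    intro a b
    have := Convex.norm_image_sub_le_of_norm_deriv_le (f := deriv g) (s := Set.univ)
      (fun t _ => hgd1 t) (fun t _ => hτ t) convex_univ (Set.mem_univ b) (Set.mem_univ a)
    simpa using this
  set h : ℝ → ℝ := fun t => g t - deriv g y * t with hh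
  have hH : ∀ t, HasDerivAt h (deriv g t - deriv g y) t := fun t =>
    ((hgd t).hasDerivAt).sub (by simpa using (hasDerivAt_id t).const_mul (deriv g y))
  have hder : ∀ t, deriv h t = deriv g t - deriv g y := fun t => (hH t).deriv
  have hbd : ∀ t ∈ Set.uIcc y x, ‖deriv h t‖ ≤ τ * |x - y| := by
    intro t ht
    rw [hder, Real.norm_eq_abs]
    refine (hlip t y).trans ?_
    have hτ0 : 0 ≤ τ := le_trans (abs_nonneg _) (hτ 0)
    apply mul_le_mul_of_nonneg_left _ hτ0
    rcases Set.mem_uIcc.mp ht with ⟨h1, h2⟩ | ⟨h1, h2⟩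
    · rw [abs_of_nonneg (by linarith : (0:ℝ) ≤ t - y), abs_of_nonneg (by linarith : (0:ℝ) ≤ x - y)]; linarith
    · rw [abs_of_nonpos (by linarith : t - y ≤ 0), abs_of_nonpos (by linarith : x - y ≤ 0)]; linarith
  have key := Convex.norm_image_sub_le_of_norm_deriv_le (f := h) (s := Set.uIcc y x)
    (fun t _ => (hH t).differentiableAt) hbd (convex_uIcc _ _)
    (Set.left_mem_uIcc) (Set.right_mem_uIcc)
  have : h x - h y = g x - g y - deriv g y * (x - y) := by rw [hh]; ring
  rw [this, Real.norm_eq_abs, Real.norm_eq_abs] at key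
  calc |g x - g y - deriv g y * (x - y)| ≤ τ * |x - y| * |x - y| := key
    _ = τ * (x - y)^2 := by rw [mul_assoc, ← abs_mul, ← sq, abs_of_nonneg (sq_nonneg _)]

lemma memLp_two_condexp {Ω : Type*} [F : MeasurableSpace Ω] {μ : Measure Ω}
    [IsProbabilityMeasure μ] (m : MeasurableSpace Ω) (hm : m ≤ F) {f : Ω → ℝ}
    (hf : MemLp f 2 μ) : MemLp (μ[f|m]) 2 μ := by
  set fL : Lp ℝ 2 μ := hf.toLp f with hfL
  set gL : Lp ℝ 2 μ := ↑(condExpL2 ℝ ℝ hm fL) with hgL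
  have hgm : AEStronglyMeasurable[m] (gL : Ω → ℝ) μ := aestronglyMeasurable_condExpL2 hm fL
  have hgint : Integrable (gL : Ω → ℝ) μ := (Lp.memLp gL).integrable (by norm_num)
  have hgint' : ∀ s : Set Ω, MeasurableSet[m] s → μ s < ⊤ → Integrable (gL : Ω → ℝ) (μ.restrict s) :=
    fun s _ _ => hgint.restrict
  have h2 : ∀ s : Set Ω, MeasurableSet[m] s → μ s < ⊤ →
      ∫ x in s, gL x ∂μ = ∫ x in s, f x ∂μ := by
    intro s hs hμs
    calc ∫ x in s, gL x ∂μ = ∫ x in s, fL x ∂μ :=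
          integral_condExpL2_eq (𝕜 := ℝ) hm fL hs (measure_ne_top μ s)
      _ = ∫ x in s, f x ∂μ := integral_congr_ae (ae_restrict_of_ae hf.coeFn_toLp)
  have heq : (gL : Ω → ℝ) =ᵐ[μ] μ[f|m] :=
    ae_eq_condExp_of_forall_setIntegral_eq hm (hf.integrable (by norm_num))
      hgint' h2 hgm
  exact (Lp.memLp gL).ae_eq heq

/-- Conditional expectation of `f` given the sub-σ-algebra `m`, as a function. -/
noncomputable def ce {Ω : Type*} {m0 : MeasurableSpace Ω} (m : MeasurableSpace Ω)
    (μ : @Measure Ω m0) (f : Ω → ℝ) : Ω → ℝ := μ[f|m]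

/-- Second-order bound: σ(z) ⊆ σ(x'), g twice continuously differentiable with
|g''| ≤ τ, ζ = ω' − E[ω'|x'] square-integrable: then
E[|E[g(ω')|z] − E[g(E[ω'|x'])|z]|] ≤ τ·E[ζ²]. -/
theorem stmt9 {Ω : Type*} [F : MeasurableSpace Ω] {μ : Measure Ω} [IsProbabilityMeasure μ]
    (mz mx : MeasurableSpace Ω) (hzx : mz ≤ mx) (hmx : mx ≤ F)
    (ω' : Ω → ℝ) (hω'm : Measurable[F] ω') (hω2 : MemLp ω' 2 μ)
    (g : ℝ → ℝ) (τ : ℝ) (hg : ContDiff ℝ 2 g)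
    (hτ : ∀ w, |deriv (deriv g) w| ≤ τ)
    (hgω : Integrable (fun a => g (ω' a)) μ)
    (hgW : Integrable (fun a => g (ce mx μ ω' a)) μ) :
    ∫ a, |ce mz μ (fun b => g (ω' b)) a - ce mz μ (fun b => g (ce mx μ ω' b)) a| ∂μ
      ≤ τ * ∫ a, (ω' a - ce mx μ ω' a) ^ 2 ∂μ := by
  have hmz : mz ≤ F := hzx.trans hmx
  have hτ0 : 0 ≤ τ := le_trans (abs_nonneg _) (hτ 0)
  set W : Ω → ℝ := μ[ω'|mx] with hW
  have hce : ce mx μ ω' = W := rfl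
  rw [hce] at hgW ⊢
  -- basic facts
  have hg2 : ContDiff ℝ (1+1) g := by norm_num; exact hg
  have hφc : Continuous (deriv g) := ((contDiff_succ_iff_deriv.mp hg2).2.2).continuous
  have hWsm : StronglyMeasurable[mx] W := stronglyMeasurable_condExp (m := mx) (μ := μ) (f := ω')
  have hWaesm : AEStronglyMeasurable[F] W μ := (hWsm.mono hmx).aestronglyMeasurable
  have hW2 : MemLp W 2 μ := memLp_two_condexp (F := F) mx hmx hω2
  have hζ2 : MemLp (fun a => ω' a - W a) 2 μ := hω2.sub hW2
  have hζint : Integrable (fun a => ω' a - W a) μ := hζ2.integrable (by norm_num)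
  have hζsq : Integrable (fun a => (ω' a - W a) ^ 2) μ := hζ2.integrable_sq
  set R : Ω → ℝ := fun a => g (ω' a) - g (W a) - deriv g (W a) * (ω' a - W a) with hR
  have hRbd : ∀ a, |R a| ≤ τ * (ω' a - W a) ^ 2 := fun a => tay g τ hg hτ (ω' a) (W a)
  have hRaesm : AEStronglyMeasurable[F] R μ := by
    refine (hgω.1.sub hgW.1).sub (AEStronglyMeasurable.mul ?_ hζint.1)
    exact (hφc.comp_stronglyMeasurable (hWsm.mono hmx)).aestronglyMeasurable
  have hRint : Integrable R μ := Integrable.mono' (hζsq.const_mul τ) hRaesm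
    (Filter.Eventually.of_forall fun a => by
      simpa [Real.norm_eq_abs] using hRbd a)
  set P : Ω → ℝ := fun a => deriv g (W a) * (ω' a - W a) with hP
  have hPint : Integrable P μ := by
    have hfun : P = fun a => g (ω' a) - g (W a) - R a := by funext a; simp only [hP, hR]; ring
    rw [hfun]; exact (hgω.sub hgW).sub hRint
  -- conditional expectation of P given mx is 0
  have hζ0 : μ[fun a => ω' a - W a|mx] =ᵐ[μ] 0 := by
    have h1 : μ[fun a => ω' a - W a|mx] =ᵐ[μ] μ[ω'|mx] - μ[W|mx] :=
      condExp_sub (hω2.integrable (by norm_num)) (integrable_condExp) mx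
    have h2 : μ[W|mx] =ᵐ[μ] W := condExp_condExp_of_le le_rfl hmx
    filter_upwards [h1, h2] with a ha hb
    simp only [Pi.sub_apply, Pi.zero_apply] at *
    rw [ha, hb]; simp [hW]
  have hPmx : μ[P|mx] =ᵐ[μ] 0 := by
    have hmul : μ[P|mx] =ᵐ[μ] (fun a => deriv g (W a)) * μ[fun a => ω' a - W a|mx] :=
      condExp_mul_of_stronglyMeasurable_left (hφc.comp_stronglyMeasurable hWsm) hPint hζint
    filter_upwards [hmul, hζ0] with a ha hb
    simp only [Pi.mul_apply, Pi.zero_apply] at *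
    rw [ha, hb, mul_zero]
  have hPmz : μ[P|mz] =ᵐ[μ] 0 := by
    have h1 : μ[μ[P|mx]|mz] =ᵐ[μ] μ[P|mz] := condExp_condExp_of_le hzx hmx
    have h2 : μ[μ[P|mx]|mz] =ᵐ[μ] μ[(0 : Ω → ℝ)|mz] := condExp_congr_ae hPmx
    refine h1.symm.trans (h2.trans ?_)
    rw [condExp_zero]
  -- main identity
  have hsplit : (fun a => g (ω' a)) - (fun a => g (W a)) = P + R := by
    funext a; simp only [Pi.sub_apply, Pi.add_apply, hP, hR]; ring
  have hmain : μ[fun b => g (ω' b)|mz] - μ[fun b => g (W b)|mz] =ᵐ[μ] μ[R|mz] := by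
    have h1 : μ[(fun a => g (ω' a)) - (fun a => g (W a))|mz]
        =ᵐ[μ] μ[fun b => g (ω' b)|mz] - μ[fun b => g (W b)|mz] := condExp_sub hgω hgW mz
    have h2 : μ[(fun a => g (ω' a)) - (fun a => g (W a))|mz] =ᵐ[μ] μ[P|mz] + μ[R|mz] := by
      rw [hsplit]; exact condExp_add hPint hRint mz
    filter_upwards [h1, h2, hPmz] with a ha hb hc
    simp only [Pi.sub_apply, Pi.add_apply, Pi.zero_apply] at *
    rw [← ha, hb, hc, zero_add]
  -- integrate
  have hLHS : ∫ a, |ce mz μ (fun b => g (ω' b)) a - ce mz μ (fun b => g (W b)) a| ∂μ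
      = ∫ a, |(μ[R|mz]) a| ∂μ := by
    refine integral_congr_ae ?_
    filter_upwards [hmain] with a ha
    simp only [Pi.sub_apply] at ha
    simp only [ce]
    rw [ha]
  rw [hLHS]
  calc ∫ a, |(μ[R|mz]) a| ∂μ ≤ ∫ a, |R a| ∂μ := integral_abs_condExp_le R
    _ ≤ ∫ a, τ * (ω' a - W a) ^ 2 ∂μ :=
        integral_mono hRint.abs (hζsq.const_mul τ) hRbd
    _ = τ * ∫ a, (ω' a - W a) ^ 2 ∂μ := integral_const_mul τ _
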